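/- Let E be a real inner product space, λ ∈ ℝ, and f : E → ℝ a λ-concave continuously differentiable function. Let α : [0, ∞) → E be an f-gradient curve with α(0) = p, and let q ∈ E. Then for all t ≥ 0, ‖α(t) − q‖² ≤ ‖p − q‖² + (2·f(p) − 2·f(q) + λ·‖p − q‖²)·θ_λ(t) + ‖∇f(p)‖²·θ_λ(t)², where θ_λ(t) = t if λ = 0 and θ_λ(t) = (e^{λt} − 1)/λ if λ ≠ 0. -/

import Mathlib

open scoped RealInnerProductSpace

/-- The function `θ_λ` of Lemma 2.4. -/
noncomputable def thetaLam (lam t : ℝ) : ℝ :=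
  if lam = 0 then t else (Real.exp (lam * t) - 1) / lam


lemma thetaLam_zero (lam : ℝ) : thetaLam lam 0 = 0 := by
  simp [thetaLam]

lemma lam_mul_thetaLam (lam t : ℝ) : lam * thetaLam lam t = Real.exp (lam * t) - 1 := by
  rcases eq_or_ne lam 0 with h | h
  · simp [thetaLam, h]
  · simp only [thetaLam, h, if_false]
    field_simp

lemma hasDerivAt_thetaLam (lam t : ℝ) :
    HasDerivAt (thetaLam lam) (Real.exp (lam * t)) t := by
  rcases eq_or_ne lam 0 with h | h
  · have : thetaLam lam = fun s : ℝ => s := funext fun s => by simp [thetaLam, h]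
    rw [this, h]
    rw [zero_mul, Real.exp_zero]; exact hasDerivAt_id' t
  · have h1 : HasDerivAt (fun s : ℝ => lam * s) lam t := by
      simpa using (hasDerivAt_id t).const_mul lam
    have h2 : HasDerivAt (fun s : ℝ => Real.exp (lam * s)) (Real.exp (lam * t) * lam) t :=
      (Real.hasDerivAt_exp _).comp t h1
    have h3 : HasDerivAt (fun s : ℝ => (Real.exp (lam * s) - 1) / lam)
        (Real.exp (lam * t) * lam / lam) t := (h2.sub_const 1).div_const lam
    have he : Real.exp (lam * t) * lam / lam = Real.exp (lam * t) := by field_simp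
    have hfun : thetaLam lam = fun s : ℝ => (Real.exp (lam * s) - 1) / lam :=
      funext fun s => by simp [thetaLam, h]
    rw [hfun, ← he]
    exact h3

lemma antitone_aux {T : ℝ} (hT : 0 ≤ T) {u u' : ℝ → ℝ}
    (hc : ContinuousOn u (Set.Icc 0 T))
    (hd : ∀ s ∈ Set.Ioo (0:ℝ) T, HasDerivAt u (u' s) s)
    (hle : ∀ s ∈ Set.Ioo (0:ℝ) T, u' s ≤ 0) : u T ≤ u 0 := by
  rcases eq_or_lt_of_le hT with rfl | hT'
  · exact le_refl _
  have hanti : AntitoneOn u (Set.Icc 0 T) := by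
    apply antitoneOn_of_deriv_nonpos (convex_Icc (0:ℝ) T) hc
    · intro s hs
      rw [interior_Icc] at hs
      exact (hd s hs).differentiableAt.differentiableWithinAt
    · intro s hs
      rw [interior_Icc] at hs
      rw [(hd s hs).deriv]
      exact hle s hs
  exact hanti (Set.left_mem_Icc.2 hT) (Set.right_mem_Icc.2 hT) hT

lemma grad_ineq {E : Type*} [NormedAddCommGroup E] [InnerProductSpace ℝ E]
    (lam : ℝ) (f : E → ℝ) (g : E → E)
    (hconc : ConcaveOn ℝ Set.univ (fun x => f x - lam / 2 * ‖x‖ ^ 2))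
    (hg : ∀ x, HasFDerivAt f (innerSL ℝ (g x)) x) (x y : E) :
    f y ≤ f x + ⟪g x, y - x⟫ + lam / 2 * ‖y - x‖ ^ 2 := by
  set F : E → ℝ := fun z => f z - lam / 2 * ‖z‖ ^ 2 with hF
  -- derivative of F at x
  have hnorm : HasFDerivAt (fun z : E => lam / 2 * ‖z‖ ^ 2)
      ((lam / 2) • (2 • (innerSL ℝ x))) x := by
    exact (hasStrictFDerivAt_norm_sq x).hasFDerivAt.const_smul (lam / 2)
  have hdF : HasFDerivAt F (innerSL ℝ (g x) - (lam / 2) • (2 • (innerSL ℝ x))) x :=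
    (hg x).sub hnorm
  -- curve
  set d : E := y - x with hd
  have hc : HasDerivAt (fun s : ℝ => x + s • d) d 0 := by
    simpa using ((hasDerivAt_id (0:ℝ)).smul_const d).const_add x
  have hc0 : x + (0:ℝ) • d = x := by simp
  have hdF' : HasFDerivAt F (innerSL ℝ (g x) - (lam / 2) • (2 • (innerSL ℝ x)))
      (x + (0:ℝ) • d) := by rw [hc0]; exact hdF
  have hφ : HasDerivAt (fun s : ℝ => F (x + s • d))
      ((innerSL ℝ (g x) - (lam / 2) • (2 • (innerSL ℝ x))) d) 0 :=
    by have := hdF'.comp_hasDerivAt (0:ℝ) hc; exact this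
  set D : ℝ := (innerSL ℝ (g x) - (lam / 2) • (2 • (innerSL ℝ x))) d with hD
  -- slope inequality from concavity
  have hslope : ∀ s ∈ Set.Ioo (0:ℝ) 1, F y - F x ≤ slope (fun s : ℝ => F (x + s • d)) 0 s := by
    intro s hs
    have hcc := hconc.2 (Set.mem_univ x) (Set.mem_univ y)
      (show (0:ℝ) ≤ 1 - s by linarith [hs.2]) (le_of_lt hs.1)
      (show (1 - s) + s = 1 by ring)
    have hpt : (1 - s) • x + s • y = x + s • d := by
      rw [hd]; module
    rw [hpt] at hcc
    rw [slope_def_field]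
    have h0 : x + (0:ℝ) • d = x := by simp
    rw [h0]
    rw [sub_zero, le_div_iff₀ hs.1]
    have hcc' : F x + s * (F y - F x) ≤ F (x + s • d) := by
      have : (1 - s) • F x + s • F y = F x + s * (F y - F x) := by
        simp only [smul_eq_mul]; ring
      linarith [this ▸ hcc]
    nlinarith [hcc']
  -- pass to the limit
  have hlim : Filter.Tendsto (slope (fun s : ℝ => F (x + s • d)) 0)
      (nhdsWithin 0 (Set.Ioi 0)) (nhds D) := by
    have h1 : HasDerivWithinAt (fun s : ℝ => F (x + s • d)) D (Set.Ioi 0) 0 :=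
      hφ.hasDerivWithinAt
    rw [hasDerivWithinAt_iff_tendsto_slope] at h1
    have : Set.Ioi (0:ℝ) \ {0} = Set.Ioi 0 := by
      apply Set.diff_singleton_eq_self
      simp
    rwa [this] at h1
  have hFle : F y - F x ≤ D := by
    refine ge_of_tendsto hlim ?_
    filter_upwards [Ioo_mem_nhdsGT_of_mem (Set.mem_Ico.2 ⟨le_refl 0, zero_lt_one⟩)] with s hs
    exact hslope s hs
  -- unfold
  have hDval : D = ⟪g x, y - x⟫ - lam * ⟪x, y - x⟫ := by
    rw [hD]
    simp only [ContinuousLinearMap.sub_apply, ContinuousLinearMap.smul_apply,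
      innerSL_apply_apply, smul_eq_mul]
    ring
  have hnsq : ‖y - x‖ ^ 2 = ‖y‖ ^ 2 - 2 * ⟪x, y⟫ + ‖x‖ ^ 2 := by
    rw [← real_inner_self_eq_norm_sq, inner_sub_sub_self, real_inner_self_eq_norm_sq,
      real_inner_self_eq_norm_sq]
    rw [real_inner_comm]
    ring
  have hix : ⟪x, y - x⟫ = ⟪x, y⟫ - ‖x‖ ^ 2 := by
    rw [inner_sub_right, real_inner_self_eq_norm_sq]
  have hFy : F y = f y - lam / 2 * ‖y‖ ^ 2 := rfl
  have hFx : F x = f x - lam / 2 * ‖x‖ ^ 2 := rfl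
  rw [hDval, hix] at hFle
  rw [hFy, hFx] at hFle
  rw [hnsq]
  linarith

lemma grad_mono {E : Type*} [NormedAddCommGroup E] [InnerProductSpace ℝ E]
    (lam : ℝ) (f : E → ℝ) (g : E → E)
    (hconc : ConcaveOn ℝ Set.univ (fun x => f x - lam / 2 * ‖x‖ ^ 2))
    (hg : ∀ x, HasFDerivAt f (innerSL ℝ (g x)) x) (x y : E) :
    ⟪x - y, g x - g y⟫ ≤ lam * ‖x - y‖ ^ 2 := by
  have h1 := grad_ineq lam f g hconc hg x y
  have h2 := grad_ineq lam f g hconc hg y x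
  have hn : ‖y - x‖ = ‖x - y‖ := norm_sub_rev _ _
  rw [hn] at h1
  have e1 : ⟪g x, y - x⟫ = -⟪x - y, g x⟫ := by
    rw [real_inner_comm, ← neg_sub x y, inner_neg_left]
  have e2 : ⟪g y, x - y⟫ = ⟪x - y, g y⟫ := real_inner_comm _ _
  have e3 : ⟪x - y, g x - g y⟫ = ⟪x - y, g x⟫ - ⟪x - y, g y⟫ := inner_sub_right _ _ _
  rw [e1] at h1; rw [e2] at h2
  linarith

/-- Distance estimate from a fixed point to a gradient curve of a λ-concave function
(linear model of Lemma 2.4 (ii)). -/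
theorem gradient_curve_dist_to_point_est
    {E : Type*} [NormedAddCommGroup E] [InnerProductSpace ℝ E]
    (lam : ℝ) (f : E → ℝ) (g : E → E)
    (hconc : ConcaveOn ℝ Set.univ (fun x => f x - lam / 2 * ‖x‖ ^ 2))
    (hg : ∀ x, HasFDerivAt f (innerSL ℝ (g x)) x) (hgc : Continuous g)
    (α : ℝ → E)
    (hα : ∀ t ∈ Set.Ici (0 : ℝ), HasDerivWithinAt α (g (α t)) (Set.Ici 0) t)
    (p : E) (hp : α 0 = p) (q : E) :
    ∀ t ≥ (0 : ℝ),
      ‖α t - q‖ ^ 2 ≤ ‖p - q‖ ^ 2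
        + (2 * f p - 2 * f q + lam * ‖p - q‖ ^ 2) * thetaLam lam t
        + ‖g p‖ ^ 2 * (thetaLam lam t) ^ 2 := by
  intro t ht
  have hcont : ContinuousOn α (Set.Ici 0) := fun s hs => (hα s hs).continuousWithinAt
  have hderiv : ∀ s : ℝ, 0 < s → HasDerivAt α (g (α s)) s := fun s hs =>
    (hα s (le_of_lt hs)).hasDerivAt (Ici_mem_nhds hs)
  -- Step C : contraction
  have contract : ∀ ε ≥ (0:ℝ), ∀ s ≥ (0:ℝ),
      ‖α (s + ε) - α s‖ ^ 2 ≤ Real.exp (2 * lam * s) * ‖α ε - p‖ ^ 2 := by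
    intro ε hε s hs
    set u : ℝ → ℝ := fun r => Real.exp (-(2 * lam) * r) * ‖α (r + ε) - α r‖ ^ 2 with hu
    have hcu : ContinuousOn u (Set.Icc 0 s) := by
      apply ContinuousOn.mul
      · exact (Real.continuous_exp.comp (continuous_const.mul continuous_id)).continuousOn
      · apply ContinuousOn.pow
        apply ContinuousOn.norm
        apply ContinuousOn.sub
        · exact hcont.comp ((continuous_id.add continuous_const).continuousOn)
            (fun r hr => by
              have : (0:ℝ) ≤ r := hr.1
              simp only [Set.mem_Ici, id_eq]
              positivity)
        · exact hcont.mono (fun r hr => hr.1)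
    have hdu : ∀ r ∈ Set.Ioo (0:ℝ) s, HasDerivAt u
        (Real.exp (-(2 * lam) * r) *
          (2 * ⟪α (r + ε) - α r, g (α (r + ε)) - g (α r)⟫
            - (2 * lam) * ‖α (r + ε) - α r‖ ^ 2)) r := by
      intro r hr
      have hr0 : 0 < r := hr.1
      have hrε : 0 < r + ε := by linarith
      have hA1 : HasDerivAt (fun r : ℝ => α (r + ε)) (g (α (r + ε))) r := by
        have := (hderiv (r + ε) hrε).scomp r ((hasDerivAt_id r).add_const ε)
        simpa [Function.comp_def] using this
      have hv : HasDerivAt (fun r : ℝ => α (r + ε) - α r)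
          (g (α (r + ε)) - g (α r)) r := hA1.sub (hderiv r hr0)
      have hN : HasDerivAt (fun r : ℝ => ‖α (r + ε) - α r‖ ^ 2)
          (2 * ⟪α (r + ε) - α r, g (α (r + ε)) - g (α r)⟫) r := hv.norm_sq
      have hE : HasDerivAt (fun r : ℝ => Real.exp (-(2 * lam) * r))
          (Real.exp (-(2 * lam) * r) * (-(2 * lam))) r := by
        have h1 : HasDerivAt (fun r : ℝ => -(2 * lam) * r) (-(2 * lam)) r := by
          simpa using (hasDerivAt_id r).const_mul (-(2 * lam))
        exact (Real.hasDerivAt_exp _).comp r h1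
      have := hE.mul hN
      refine this.congr_deriv ?_
      ring
    have hleu : ∀ r ∈ Set.Ioo (0:ℝ) s,
        Real.exp (-(2 * lam) * r) *
          (2 * ⟪α (r + ε) - α r, g (α (r + ε)) - g (α r)⟫
            - (2 * lam) * ‖α (r + ε) - α r‖ ^ 2) ≤ 0 := by
      intro r hr
      apply mul_nonpos_of_nonneg_of_nonpos (Real.exp_pos _).le
      have := grad_mono lam f g hconc hg (α (r + ε)) (α r)
      linarith
    have hres := antitone_aux hs hcu hdu hleu
    have hu0 : u 0 = ‖α ε - p‖ ^ 2 := by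
      simp [hu, hp]
    rw [hu0] at hres
    have hkey : Real.exp (2 * lam * s) * Real.exp (-(2 * lam) * s) = 1 := by
      rw [← Real.exp_add]
      norm_num
    calc ‖α (s + ε) - α s‖ ^ 2
        = (Real.exp (2 * lam * s) * Real.exp (-(2 * lam) * s)) * ‖α (s + ε) - α s‖ ^ 2 := by
          rw [hkey, one_mul]
      _ = Real.exp (2 * lam * s) * u s := by rw [hu]; ring
      _ ≤ Real.exp (2 * lam * s) * ‖α ε - p‖ ^ 2 :=
          mul_le_mul_of_nonneg_left hres (Real.exp_pos _).le
  -- Step D : gradient norm bound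
  have gradnorm : ∀ s ≥ (0:ℝ), ‖g (α s)‖ ≤ Real.exp (lam * s) * ‖g p‖ := by
    intro s hs
    have hmap : Filter.Tendsto (fun ε : ℝ => s + ε) (nhdsWithin 0 (Set.Ioi 0))
        (nhdsWithin s (Set.Ioi s)) := by
      apply tendsto_nhdsWithin_of_tendsto_nhds_of_eventually_within
      · have : Filter.Tendsto (fun ε : ℝ => s + ε) (nhds 0) (nhds (s + 0)) :=
          (continuous_const.add continuous_id).tendsto 0
        rw [add_zero] at this
        exact this.mono_left nhdsWithin_le_nhds
      · filter_upwards [self_mem_nhdsWithin] with ε hε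
        exact lt_add_of_pos_right s hε
    have hds : HasDerivWithinAt α (g (α s)) (Set.Ioi s) s :=
      (hα s hs).mono (fun r hr => le_trans hs (le_of_lt hr))
    have hts : Filter.Tendsto (slope α s) (nhdsWithin s (Set.Ioi s)) (nhds (g (α s))) := by
      have h1 := hasDerivWithinAt_iff_tendsto_slope.1 hds
      rwa [Set.diff_singleton_eq_self (by simp)] at h1
    have T1 : Filter.Tendsto (fun ε : ℝ => ‖slope α s (s + ε)‖)
        (nhdsWithin 0 (Set.Ioi 0)) (nhds ‖g (α s)‖) := (hts.comp hmap).norm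
    have hds0 : HasDerivWithinAt α (g p) (Set.Ioi 0) 0 := by
      have := (hα 0 (Set.mem_Ici.2 le_rfl)).mono (fun r (hr : r ∈ Set.Ioi (0:ℝ)) => Set.mem_Ici.2 (le_of_lt hr))
      rwa [hp] at this
    have hts0 : Filter.Tendsto (slope α 0) (nhdsWithin 0 (Set.Ioi 0)) (nhds (g p)) := by
      have h1 := hasDerivWithinAt_iff_tendsto_slope.1 hds0
      rwa [Set.diff_singleton_eq_self (by simp)] at h1
    have T2 : Filter.Tendsto (fun ε : ℝ => Real.exp (lam * s) * ‖slope α 0 ε‖)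
        (nhdsWithin 0 (Set.Ioi 0)) (nhds (Real.exp (lam * s) * ‖g p‖)) :=
      hts0.norm.const_mul _
    refine le_of_tendsto_of_tendsto T1 T2 ?_
    filter_upwards [self_mem_nhdsWithin] with ε (hε : 0 < ε)
    have hA : ‖α (s + ε) - α s‖ ≤ Real.exp (lam * s) * ‖α ε - p‖ := by
      have h1 := contract ε hε.le s hs
      have h2 : Real.exp (2 * lam * s) = Real.exp (lam * s) * Real.exp (lam * s) := by
        rw [← Real.exp_add]; ring_nf
      have h3 : ‖α (s + ε) - α s‖ ^ 2 ≤ (Real.exp (lam * s) * ‖α ε - p‖) ^ 2 := by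
        rw [mul_pow]; rw [h2] at h1; nlinarith [h1]
      have h4 := Real.sqrt_le_sqrt h3
      rwa [Real.sqrt_sq (norm_nonneg _),
        Real.sqrt_sq (mul_nonneg (Real.exp_pos _).le (norm_nonneg _))] at h4
    have e1 : ‖slope α s (s + ε)‖ = ε⁻¹ * ‖α (s + ε) - α s‖ := by
      rw [slope, vsub_eq_sub, add_sub_cancel_left, norm_smul, Real.norm_eq_abs, abs_inv,
        abs_of_pos hε]
    have e2 : ‖slope α 0 ε‖ = ε⁻¹ * ‖α ε - α 0‖ := by
      rw [slope, vsub_eq_sub, sub_zero, norm_smul, Real.norm_eq_abs, abs_inv, abs_of_pos hε]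
    show ‖slope α s (s + ε)‖ ≤ Real.exp (lam * s) * ‖slope α 0 ε‖
    rw [e1, e2, hp]
    calc ε⁻¹ * ‖α (s + ε) - α s‖ ≤ ε⁻¹ * (Real.exp (lam * s) * ‖α ε - p‖) :=
          mul_le_mul_of_nonneg_left hA (inv_nonneg.2 hε.le)
      _ = Real.exp (lam * s) * (ε⁻¹ * ‖α ε - p‖) := by ring
  -- derivative of the auxiliary function J
  have hJd : ∀ r : ℝ, HasDerivAt (fun r : ℝ => thetaLam lam r * (Real.exp (lam * r) + 1) / 2)
      (Real.exp (2 * (lam * r))) r := by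
    intro r
    have h1 : HasDerivAt (fun r : ℝ => lam * r) lam r := by
      simpa using (hasDerivAt_id r).const_mul lam
    have h2 : HasDerivAt (fun r : ℝ => Real.exp (lam * r) + 1) (Real.exp (lam * r) * lam) r :=
      ((Real.hasDerivAt_exp _).comp r h1).add_const 1
    have h3 := ((hasDerivAt_thetaLam lam r).mul h2).div_const 2
    refine h3.congr_deriv (Eq.symm ?_)
    have hkey := lam_mul_thetaLam lam r
    have he2 : Real.exp (2 * (lam * r)) = Real.exp (lam * r) * Real.exp (lam * r) := by
      rw [← Real.exp_add]; ring_nf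
    rw [he2]
    linear_combination (-(Real.exp (lam * r)) / 2) * hkey
  have fcont : Continuous f := by
    rw [continuous_iff_continuousAt]; exact fun x => (hg x).continuousAt
  have hJcont : Continuous (fun r : ℝ => thetaLam lam r * (Real.exp (lam * r) + 1) / 2) :=
    continuous_iff_continuousAt.2 fun r => (hJd r).continuousAt
  have hθcont : Continuous (thetaLam lam) :=
    continuous_iff_continuousAt.2 fun r => (hasDerivAt_thetaLam lam r).continuousAt
  -- Step E : value bound
  have fbound : ∀ s ≥ (0:ℝ),
      f (α s) ≤ f p + ‖g p‖ ^ 2 * (thetaLam lam s * (Real.exp (lam * s) + 1) / 2) := by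
    intro s hs
    set m : ℝ → ℝ := fun r =>
      f (α r) - ‖g p‖ ^ 2 * (thetaLam lam r * (Real.exp (lam * r) + 1) / 2) with hm
    have hcm : ContinuousOn m (Set.Icc 0 s) := by
      apply ContinuousOn.sub
      · exact fcont.comp_continuousOn (hcont.mono (fun r hr => hr.1))
      · exact (continuous_const.mul hJcont).continuousOn
    have hdm : ∀ r ∈ Set.Ioo (0:ℝ) s, HasDerivAt m
        (‖g (α r)‖ ^ 2 - ‖g p‖ ^ 2 * Real.exp (2 * (lam * r))) r := by
      intro r hr
      have hfα : HasDerivAt (fun r : ℝ => f (α r)) (‖g (α r)‖ ^ 2) r := by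
        have := (hg (α r)).comp_hasDerivAt r (hderiv r hr.1)
        have hval : (innerSL ℝ (g (α r))) (g (α r)) = ‖g (α r)‖ ^ 2 := by
          rw [innerSL_apply_apply, real_inner_self_eq_norm_sq]
        rwa [hval] at this
      exact hfα.sub ((hJd r).const_mul (‖g p‖ ^ 2))
    have hlem : ∀ r ∈ Set.Ioo (0:ℝ) s,
        ‖g (α r)‖ ^ 2 - ‖g p‖ ^ 2 * Real.exp (2 * (lam * r)) ≤ 0 := by
      intro r hr
      have h1 := gradnorm r hr.1.le
      have he2 : Real.exp (2 * (lam * r)) = Real.exp (lam * r) * Real.exp (lam * r) := by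
        rw [← Real.exp_add]; ring_nf
      nlinarith [norm_nonneg (g (α r)), norm_nonneg (g p), Real.exp_pos (lam * r)]
    have hres := antitone_aux hs hcm hdm hlem
    have hm0 : m 0 = f p := by
      simp [hm, hp, thetaLam_zero]
    rw [hm0] at hres
    simp only [hm] at hres
    linarith
  -- Step F : final comparison
  set θ : ℝ → ℝ := thetaLam lam with hθdef
  set v : ℝ → ℝ := fun s => Real.exp (-lam * s) *
    (‖α s - q‖ ^ 2 - (‖p - q‖ ^ 2 + (2 * f p - 2 * f q + lam * ‖p - q‖ ^ 2) * θ s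
      + ‖g p‖ ^ 2 * (θ s) ^ 2)) with hv
  have hcv : ContinuousOn v (Set.Icc 0 t) := by
    apply ContinuousOn.mul
    · exact (Real.continuous_exp.comp (continuous_const.mul continuous_id)).continuousOn
    · apply ContinuousOn.sub
      · exact (((hcont.mono (fun r hr => hr.1)).sub continuousOn_const).norm).pow 2
      · exact ((continuous_const.add (continuous_const.mul hθcont)).add
          (continuous_const.mul (hθcont.pow 2))).continuousOn
  have hdv : ∀ s ∈ Set.Ioo (0:ℝ) t, HasDerivAt v
      (Real.exp (-lam * s) *
        ((2 * ⟪α s - q, g (α s)⟫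
            - ((2 * f p - 2 * f q + lam * ‖p - q‖ ^ 2) * Real.exp (lam * s)
              + ‖g p‖ ^ 2 * (2 * θ s * Real.exp (lam * s))))
          - lam * (‖α s - q‖ ^ 2 - (‖p - q‖ ^ 2
              + (2 * f p - 2 * f q + lam * ‖p - q‖ ^ 2) * θ s
              + ‖g p‖ ^ 2 * (θ s) ^ 2)))) s := by
    intro s hs
    have hℓ : HasDerivAt (fun s : ℝ => ‖α s - q‖ ^ 2) (2 * ⟪α s - q, g (α s)⟫) s :=
      ((hderiv s hs.1).sub_const q).norm_sq
    have hθd : HasDerivAt θ (Real.exp (lam * s)) s := hasDerivAt_thetaLam lam s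
    have hθ2 : HasDerivAt (fun s : ℝ => (θ s) ^ 2) (2 * θ s * Real.exp (lam * s)) s := by
      have := hθd.pow 2
      refine this.congr_deriv ?_
      ring
    have hΦd : HasDerivAt (fun s : ℝ => ‖p - q‖ ^ 2
        + (2 * f p - 2 * f q + lam * ‖p - q‖ ^ 2) * θ s + ‖g p‖ ^ 2 * (θ s) ^ 2)
        ((2 * f p - 2 * f q + lam * ‖p - q‖ ^ 2) * Real.exp (lam * s)
          + ‖g p‖ ^ 2 * (2 * θ s * Real.exp (lam * s))) s :=
      ((hθd.const_mul _).const_add _).add (hθ2.const_mul _)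
    have hE : HasDerivAt (fun s : ℝ => Real.exp (-lam * s)) (Real.exp (-lam * s) * (-lam)) s := by
      have h1 : HasDerivAt (fun s : ℝ => -lam * s) (-lam) s := by
        simpa using (hasDerivAt_id s).const_mul (-lam)
      exact (Real.hasDerivAt_exp _).comp s h1
    have := hE.mul (hℓ.sub hΦd)
    refine this.congr_deriv ?_
    simp only [Pi.sub_apply]
    ring
  have hlev : ∀ s ∈ Set.Ioo (0:ℝ) t,
      Real.exp (-lam * s) *
        ((2 * ⟪α s - q, g (α s)⟫
            - ((2 * f p - 2 * f q + lam * ‖p - q‖ ^ 2) * Real.exp (lam * s)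
              + ‖g p‖ ^ 2 * (2 * θ s * Real.exp (lam * s))))
          - lam * (‖α s - q‖ ^ 2 - (‖p - q‖ ^ 2
              + (2 * f p - 2 * f q + lam * ‖p - q‖ ^ 2) * θ s
              + ‖g p‖ ^ 2 * (θ s) ^ 2))) ≤ 0 := by
    intro s hs
    apply mul_nonpos_of_nonneg_of_nonpos (Real.exp_pos _).le
    have key1 : ⟪α s - q, g (α s)⟫ ≤ f (α s) - f q + lam / 2 * ‖α s - q‖ ^ 2 := by
      have h1 := grad_ineq lam f g hconc hg (α s) q
      have e1 : ⟪g (α s), q - α s⟫ = -⟪α s - q, g (α s)⟫ := by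
        rw [real_inner_comm, ← neg_sub (α s) q, inner_neg_left]
      have e2 : ‖q - α s‖ = ‖α s - q‖ := norm_sub_rev _ _
      rw [e1, e2] at h1
      linarith
    have key2 := fbound s hs.1.le
    have key3 : lam * θ s = Real.exp (lam * s) - 1 := lam_mul_thetaLam lam s
    have hid : (2 * f p - 2 * f q + lam * ‖p - q‖ ^ 2) * Real.exp (lam * s)
          + ‖g p‖ ^ 2 * (2 * θ s * Real.exp (lam * s))
          - lam * (‖p - q‖ ^ 2 + (2 * f p - 2 * f q + lam * ‖p - q‖ ^ 2) * θ s
              + ‖g p‖ ^ 2 * (θ s) ^ 2)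
        = 2 * f p - 2 * f q + ‖g p‖ ^ 2 * (θ s * (Real.exp (lam * s) + 1)) := by
      linear_combination (-((2 * f p - 2 * f q + lam * ‖p - q‖ ^ 2) + ‖g p‖ ^ 2 * θ s)) * key3
    linarith
  have hres := antitone_aux ht hcv hdv hlev
  have hv0 : v 0 = 0 := by
    simp [hv, hp, hθdef, thetaLam_zero]
  rw [hv0] at hres
  simp only [hv] at hres
  nlinarith [Real.exp_pos (-lam * t), hres]
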